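/- For t ≥ 3 and k < t, no uniquely C_t-saturated graph contains the graph H_{k,t-k-1} as a subgraph, where H_{m,ℓ} is a cycle of length 2m with a pendant path of length ℓ attached at one vertex. -/

import Mathlib

open SimpleGraph

/-- `G` has a cycle on `t` vertices (a cycle of length `t`). -/
def HasCycleOn {V : Type*} (G : SimpleGraph V) (t : ℕ) : Prop :=
  ∃ (v : V) (w : G.Walk v v), w.IsCycle ∧ w.length = t

/-- `c` is the edge set of some cycle on `t` vertices in `G`. -/
def IsCtEdgeSet {V : Type*} (G : SimpleGraph V) (t : ℕ) (c : Set (Sym2 V)) : Prop :=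
  ∃ (v : V) (w : G.Walk v v), w.IsCycle ∧ w.length = t ∧ {e | e ∈ w.edges} = c

/-- `G` is uniquely `C_t`-saturated: it has no cycle on `t` vertices, and adding any
edge of the complement creates exactly one cycle on `t` vertices. -/
def UniquelyCSat {V : Type*} (G : SimpleGraph V) (t : ℕ) : Prop :=
  ¬ HasCycleOn G t ∧
    ∀ x y : V, x ≠ y → ¬ G.Adj x y →
      ∃! c : Set (Sym2 V), IsCtEdgeSet (G ⊔ fromEdgeSet {s(x, y)}) t c

/-- `Hgraph m ℓ`: a cycle on `2*m` vertices (the vertices `0, …, 2*m - 1`) together with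
a pendant path of length `ℓ` (through the vertices `2*m, …, 2*m + ℓ - 1`) attached at
the cycle vertex `0`. -/
def Hgraph (m ℓ : ℕ) : SimpleGraph (Fin (2 * m + ℓ)) :=
  SimpleGraph.fromRel (fun a b =>
    (a.val < 2 * m ∧ b.val < 2 * m ∧
      (b.val = a.val + 1 ∨ (a.val = 0 ∧ b.val = 2 * m - 1))) ∨
    (a.val = 0 ∧ b.val = 2 * m) ∨
    (2 * m ≤ a.val ∧ b.val = a.val + 1))

/-- `G` contains `H` as a (not necessarily induced) subgraph. -/
def ContainsSub {W V : Type*} (H : SimpleGraph W) (G : SimpleGraph V) : Prop :=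
  ∃ f : W → V, Function.Injective f ∧ ∀ a b : W, H.Adj a b → G.Adj (f a) (f b)


def buildWalk {V : Type*} (G : SimpleGraph V) (v : ℕ → V) :
    ∀ n, (∀ i < n, G.Adj (v i) (v (i+1))) → G.Walk (v 0) (v n)
  | 0, _ => .nil
  | (n+1), h => (buildWalk G v n fun i hi => h i (Nat.lt_succ_of_lt hi)).concat (h n n.lt_succ_self)

lemma buildWalk_length {V : Type*} (G : SimpleGraph V) (v : ℕ → V) (n : ℕ)
    (h : ∀ i < n, G.Adj (v i) (v (i+1))) : (buildWalk G v n h).length = n := by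
  induction n with
  | zero => rfl
  | succ m ih => simp [buildWalk, Walk.length_concat, ih]

lemma buildWalk_edges {V : Type*} (G : SimpleGraph V) (v : ℕ → V) (n : ℕ)
    (h : ∀ i < n, G.Adj (v i) (v (i+1))) :
    (buildWalk G v n h).edges = (List.range n).map (fun i => s(v i, v (i+1))) := by
  induction n with
  | zero => rfl
  | succ m ih => simp [buildWalk, Walk.edges_concat, ih, List.range_succ]

lemma buildWalk_support {V : Type*} (G : SimpleGraph V) (v : ℕ → V) (n : ℕ)
    (h : ∀ i < n, G.Adj (v i) (v (i+1))) :
    (buildWalk G v n h).support = (List.range (n+1)).map v := by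
  induction n with
  | zero => rfl
  | succ m ih => simp [buildWalk, Walk.support_concat, ih, List.range_succ]

lemma exists_cycle_of_seq {V : Type*} (G : SimpleGraph V) (v : ℕ → V) (t : ℕ) (ht : 3 ≤ t)
    (hadj : ∀ i < t, G.Adj (v i) (v (i+1)))
    (hvt : v t = v 0)
    (hinj : ∀ i j, i ≤ t → j ≤ t → v i = v j → i = j ∨ (i = 0 ∧ j = t) ∨ (i = t ∧ j = 0)) :
    ∃ w : G.Walk (v 0) (v 0), w.IsCycle ∧ w.length = t ∧
      w.edges = (List.range t).map (fun i => s(v i, v (i+1))) := by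
  refine ⟨(buildWalk G v t hadj).copy rfl hvt, ?_, ?_, ?_⟩
  · constructor
    · constructor
      · constructor
        rw [Walk.edges_copy, buildWalk_edges]
        refine List.Nodup.map_on ?_ List.nodup_range
        intro i hi j hj hij
        simp only [List.mem_range] at hi hj
        rw [Sym2.eq_iff] at hij
        rcases hij with ⟨h1, h2⟩ | ⟨h1, h2⟩
        · rcases hinj i j (by omega) (by omega) h1 with h | ⟨_, h⟩ | ⟨h, _⟩ <;> omega
        · rcases hinj i (j+1) (by omega) (by omega) h1 with h | ⟨hi0, hjt⟩ | ⟨h, _⟩ <;>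
            rcases hinj (i+1) j (by omega) (by omega) h2 with h' | ⟨h', _⟩ | ⟨h', h''⟩ <;> omega
      · intro hnil
        have := buildWalk_length G v t hadj
        have h0 : ((buildWalk G v t hadj).copy rfl hvt).length = 0 := by rw [hnil]; rfl
        rw [Walk.length_copy] at h0
        omega
    · rw [Walk.support_copy, buildWalk_support]
      rw [List.range_succ_eq_map]
      simp only [List.map_cons, List.tail_cons, List.map_map]
      refine List.Nodup.map_on ?_ List.nodup_range
      intro i hi j hj hij
      simp only [List.mem_range, Function.comp] at hi hj hij
      rcases hinj (i+1) (j+1) (by omega) (by omega) hij with h | ⟨h, _⟩ | ⟨_, h⟩ <;> omega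
  · rw [Walk.length_copy, buildWalk_length]
  · rw [Walk.edges_copy, buildWalk_edges]

def uu (k l : ℕ) : ℕ := if l = 0 then 0 else 2*k + l - 1

def cseq1 (k l i : ℕ) : ℕ :=
  if i < l then 2*k + l - 1 - i else if i ≤ l + k then i - l else uu k l

def cseq2 (k l i : ℕ) : ℕ :=
  if i < l then 2*k + l - 1 - i else if i = l then 0
  else if i ≤ l + k then 2*k - (i - l) else uu k l

def Fv {V : Type*} (k l : ℕ) (f : Fin (2*k+l) → V) (hn : 0 < 2*k+l) (i : ℕ) : V :=
  f ⟨i % (2*k+l), Nat.mod_lt _ hn⟩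

lemma Fv_inj {V : Type*} {k l : ℕ} {f : Fin (2*k+l) → V} (hf : Function.Injective f)
    (hn : 0 < 2*k+l) {a b : ℕ} (ha : a < 2*k+l) (hb : b < 2*k+l)
    (h : Fv k l f hn a = Fv k l f hn b) : a = b := by
  have := hf h
  rw [Fin.mk.injEq, Nat.mod_eq_of_lt ha, Nat.mod_eq_of_lt hb] at this
  exact this


lemma core {V : Type*} {k l : ℕ} (hk2 : 2 ≤ k) (f : Fin (2*k+l) → V)
    (hfinj : Function.Injective f) (hn : 0 < 2*k+l) (GG : SimpleGraph V)
    (hHG : ∀ a b, (Hgraph k l).Adj a b → GG.Adj (f a) (f b))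
    (hS : GG.Adj (Fv k l f hn (uu k l)) (Fv k l f hn k)) :
    ∃ (w1 w2 : GG.Walk (Fv k l f hn (uu k l)) (Fv k l f hn (uu k l))),
      w1.IsCycle ∧ w1.length = l + k + 1 ∧ w2.IsCycle ∧ w2.length = l + k + 1 ∧
      {e | e ∈ w1.edges} ≠ {e | e ∈ w2.edges} := by
  -- adjacency from the cycle/path relation
  have hcyc : ∀ a b : ℕ, a < (2*k+l) → b < (2*k+l) → a ≠ b →
      ((a < 2*k ∧ b < 2*k ∧ (b = a+1 ∨ (a = 0 ∧ b = 2*k-1))) ∨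
        (a = 0 ∧ b = 2*k) ∨ (2*k ≤ a ∧ b = a+1)) →
      GG.Adj (Fv k l f hn a) (Fv k l f hn b) := by
    intro a b ha hb hne hrel
    apply hHG
    rw [Hgraph, SimpleGraph.fromRel_adj]
    constructor
    · apply Fin.ne_of_val_ne
      simpa [Nat.mod_eq_of_lt ha, Nat.mod_eq_of_lt hb] using hne
    · left
      simpa [Nat.mod_eq_of_lt ha, Nat.mod_eq_of_lt hb] using hrel
  -- bounds
  have cb1 : ∀ i, cseq1 k l i < (2*k+l) := by
    intro i; unfold cseq1 uu; split_ifs <;> omega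
  have cb2 : ∀ i, cseq2 k l i < (2*k+l) := by
    intro i; unfold cseq2 uu; split_ifs <;> omega
  -- endpoint values
  have hc10 : cseq1 k l 0 = uu k l := by unfold cseq1 uu; split_ifs <;> omega
  have hc1t : cseq1 k l (l+k+1) = uu k l := by unfold cseq1 uu; split_ifs <;> omega
  have hc20 : cseq2 k l 0 = uu k l := by unfold cseq2 uu; split_ifs <;> omega
  have hc2t : cseq2 k l (l+k+1) = uu k l := by unfold cseq2 uu; split_ifs <;> omega
  -- step adjacency for walk 1
  have hadj1 : ∀ i < (l+k+1), GG.Adj (Fv k l f hn (cseq1 k l i)) (Fv k l f hn (cseq1 k l (i+1))) := by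
    intro i hi
    rcases Nat.lt_or_ge (i+1) l with h | h
    · have e1 : cseq1 k l i = 2*k+l-1-i := by unfold cseq1; split_ifs <;> omega
      have e2 : cseq1 k l (i+1) = 2*k+l-2-i := by unfold cseq1; split_ifs <;> omega
      rw [e1, e2]
      exact (hcyc (2*k+l-2-i) (2*k+l-1-i) (by omega) (by omega) (by omega)
        (Or.inr (Or.inr ⟨by omega, by omega⟩))).symm
    · rcases Nat.lt_or_ge i l with h2 | h2
      · -- i + 1 = l
        have e1 : cseq1 k l i = 2*k := by unfold cseq1; split_ifs <;> omega
        have e2 : cseq1 k l (i+1) = 0 := by unfold cseq1; split_ifs <;> omega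
        rw [e1, e2]
        exact (hcyc 0 (2*k) (by omega) (by omega) (by omega)
          (Or.inr (Or.inl ⟨rfl, rfl⟩))).symm
      · rcases Nat.lt_or_ge i (l+k) with h3 | h3
        · have e1 : cseq1 k l i = i - l := by unfold cseq1; split_ifs <;> omega
          have e2 : cseq1 k l (i+1) = i - l + 1 := by unfold cseq1; split_ifs <;> omega
          rw [e1, e2]
          exact hcyc (i-l) (i-l+1) (by omega) (by omega) (by omega)
            (Or.inl ⟨by omega, by omega, Or.inl rfl⟩)
        · -- i = l + k
          have e1 : cseq1 k l i = k := by unfold cseq1; split_ifs <;> omega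
          have e2 : cseq1 k l (i+1) = uu k l := by unfold cseq1; split_ifs <;> omega
          rw [e1, e2]
          exact hS.symm
  -- step adjacency for walk 2
  have hadj2 : ∀ i < (l+k+1), GG.Adj (Fv k l f hn (cseq2 k l i)) (Fv k l f hn (cseq2 k l (i+1))) := by
    intro i hi
    rcases Nat.lt_or_ge (i+1) l with h | h
    · have e1 : cseq2 k l i = 2*k+l-1-i := by unfold cseq2; split_ifs <;> omega
      have e2 : cseq2 k l (i+1) = 2*k+l-2-i := by unfold cseq2; split_ifs <;> omega
      rw [e1, e2]
      exact (hcyc (2*k+l-2-i) (2*k+l-1-i) (by omega) (by omega) (by omega)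
        (Or.inr (Or.inr ⟨by omega, by omega⟩))).symm
    · rcases Nat.lt_or_ge i l with h2 | h2
      · -- i + 1 = l
        have e1 : cseq2 k l i = 2*k := by unfold cseq2; split_ifs <;> omega
        have e2 : cseq2 k l (i+1) = 0 := by unfold cseq2; split_ifs <;> omega
        rw [e1, e2]
        exact (hcyc 0 (2*k) (by omega) (by omega) (by omega)
          (Or.inr (Or.inl ⟨rfl, rfl⟩))).symm
      · rcases Nat.eq_or_lt_of_le h2 with h3 | h3
        · -- i = l
          have e1 : cseq2 k l i = 0 := by unfold cseq2; split_ifs <;> omega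
          have e2 : cseq2 k l (i+1) = 2*k-1 := by unfold cseq2; split_ifs <;> omega
          rw [e1, e2]
          exact hcyc 0 (2*k-1) (by omega) (by omega) (by omega)
            (Or.inl ⟨by omega, by omega, Or.inr ⟨rfl, rfl⟩⟩)
        · rcases Nat.lt_or_ge i (l+k) with h4 | h4
          · have e1 : cseq2 k l i = 2*k - (i - l) := by unfold cseq2; split_ifs <;> omega
            have e2 : cseq2 k l (i+1) = 2*k - (i - l) - 1 := by unfold cseq2; split_ifs <;> omega
            rw [e1, e2]
            exact (hcyc (2*k-(i-l)-1) (2*k-(i-l)) (by omega) (by omega) (by omega)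
              (Or.inl ⟨by omega, by omega, Or.inl (by omega)⟩)).symm
          · -- i = l + k
            have e1 : cseq2 k l i = k := by unfold cseq2; split_ifs <;> omega
            have e2 : cseq2 k l (i+1) = uu k l := by unfold cseq2; split_ifs <;> omega
            rw [e1, e2]
            exact hS.symm
  -- injectivity of the sequences
  have ci1 : ∀ i j, i ≤ (l+k+1) → j ≤ (l+k+1) → cseq1 k l i = cseq1 k l j →
      i = j ∨ (i = 0 ∧ j = (l+k+1)) ∨ (i = (l+k+1) ∧ j = 0) := by
    intro i j hi hj hij; unfold cseq1 uu at hij; split_ifs at hij <;> omega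
  have ci2 : ∀ i j, i ≤ (l+k+1) → j ≤ (l+k+1) → cseq2 k l i = cseq2 k l j →
      i = j ∨ (i = 0 ∧ j = (l+k+1)) ∨ (i = (l+k+1) ∧ j = 0) := by
    intro i j hi hj hij; unfold cseq2 uu at hij; split_ifs at hij <;> omega
  -- build the two cycles
  obtain ⟨w1, hw1c, hw1l, hw1e⟩ := exists_cycle_of_seq GG (fun i => Fv k l f hn (cseq1 k l i)) (l+k+1)
    (by omega) hadj1 (by show Fv k l f hn (cseq1 k l (l+k+1)) = Fv k l f hn (cseq1 k l 0); rw [hc1t, hc10])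
    (fun i j hi hj hij => ci1 i j hi hj (Fv_inj hfinj hn (cb1 _) (cb1 _) hij))
  obtain ⟨w2, hw2c, hw2l, hw2e⟩ := exists_cycle_of_seq GG (fun i => Fv k l f hn (cseq2 k l i)) (l+k+1)
    (by omega) hadj2 (by show Fv k l f hn (cseq2 k l (l+k+1)) = Fv k l f hn (cseq2 k l 0); rw [hc2t, hc20])
    (fun i j hi hj hij => ci2 i j hi hj (Fv_inj hfinj hn (cb2 _) (cb2 _) hij))
  have hcast : Fv k l f hn (cseq1 k l 0) = Fv k l f hn (uu k l) := by rw [hc10]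
  have hcast2 : Fv k l f hn (cseq2 k l 0) = Fv k l f hn (uu k l) := by rw [hc20]
  refine ⟨w1.copy hcast hcast, w2.copy hcast2 hcast2, ?_, ?_, ?_, ?_, ?_⟩
  · exact (Walk.isCycle_copy ..).mpr hw1c
  · rw [Walk.length_copy, hw1l]
  · exact (Walk.isCycle_copy ..).mpr hw2c
  · rw [Walk.length_copy, hw2l]
  · -- the distinguished edge s(Fv 0, Fv 1) is in w1 but not w2
    intro hset
    have e1 : cseq1 k l l = 0 := by unfold cseq1; split_ifs <;> omega
    have e2 : cseq1 k l (l+1) = 1 := by unfold cseq1; split_ifs <;> omega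
    have hmem : s(Fv k l f hn 0, Fv k l f hn 1) ∈ w1.edges := by
      rw [hw1e]
      refine List.mem_map.2 ⟨l, List.mem_range.2 (by omega), ?_⟩
      rw [e1, e2]
    have hnotmem : s(Fv k l f hn 0, Fv k l f hn 1) ∉ w2.edges := by
      rw [hw2e]
      intro hmem2
      obtain ⟨i, hi, heq⟩ := List.mem_map.1 hmem2
      rw [List.mem_range] at hi
      have hne2 : ∀ j, cseq2 k l j ≠ 1 := by
        intro j; unfold cseq2 uu; split_ifs <;> omega
      rw [Sym2.eq_iff] at heq
      rcases heq with ⟨_, hb⟩ | ⟨ha, _⟩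
      · exact hne2 (i+1) (Fv_inj hfinj hn (cb2 _) (by omega) hb)
      · exact hne2 i (Fv_inj hfinj hn (cb2 _) (by omega) ha)
    apply hnotmem
    have : s(Fv k l f hn 0, Fv k l f hn 1) ∈ {e | e ∈ (w1.copy hcast hcast).edges} := by
      rw [Walk.edges_copy]; exact hmem
    rw [hset] at this
    rw [Walk.edges_copy] at this
    exact this

/-- For `t ≥ 3` and `2 ≤ k < t`, no uniquely `C_t`-saturated graph contains
`H_{k, t-k-1}` (a `2k`-cycle with a pendant path of length `t-k-1`) as a subgraph. -/
theorem stmt_4 {V : Type*} [Fintype V] (G : SimpleGraph V) (t k : ℕ) (ht : 3 ≤ t)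
    (hk2 : 2 ≤ k) (hk : k < t) (hG : UniquelyCSat G t) :
    ¬ ContainsSub (Hgraph k (t - k - 1)) G := by
  rintro ⟨f, hfinj, hfadj⟩
  have hn : 0 < 2 * k + (t - k - 1) := by omega
  have htk : (t - k - 1) + k + 1 = t := by omega
  have hub : uu k (t - k - 1) < 2 * k + (t - k - 1) := by
    unfold uu; split_ifs <;> omega
  by_cases hxy : G.Adj (Fv k (t-k-1) f hn (uu k (t-k-1))) (Fv k (t-k-1) f hn k)
  · obtain ⟨w1, w2, hc1, hl1, -, -, -⟩ := core hk2 f hfinj hn G hfadj hxy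
    exact hG.1 ⟨_, w1, hc1, hl1.trans htk⟩
  · have hne : Fv k (t-k-1) f hn (uu k (t-k-1)) ≠ Fv k (t-k-1) f hn k := by
      intro h
      have := Fv_inj hfinj hn hub (by omega) h
      unfold uu at this; split_ifs at this <;> omega
    obtain ⟨c, -, hcu⟩ := hG.2 _ _ hne hxy
    obtain ⟨w1, w2, hc1, hl1, hc2, hl2, hset⟩ := core hk2 f hfinj hn
      (G ⊔ fromEdgeSet {s(Fv k (t-k-1) f hn (uu k (t-k-1)), Fv k (t-k-1) f hn k)})
      (fun a b hab => (sup_adj _ _ _ _).2 (Or.inl (hfadj a b hab)))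
      ((sup_adj _ _ _ _).2 (Or.inr ((fromEdgeSet_adj _).2 ⟨Set.mem_singleton _, hne⟩)))
    apply hset
    rw [hcu _ ⟨_, w1, hc1, hl1.trans htk, rfl⟩, hcu _ ⟨_, w2, hc2, hl2.trans htk, rfl⟩]
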